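/- Suppose a legal path ends at (𝐈 = (i_1,...,i_k), J). If a < b and both (i_a, j) and (i_b, j') are strands of τ(𝐈, J), then (i_a, j) is not nested under (i_b, j'), i.e., it is not the case that i_b < i_a < j < j'. -/

import Mathlib

/-- A `(k,n)`-partial noncrossing pairing: a noncrossing matching `τ` (a set of pairs
`(a,b)` with `a < b`, pairwise disjoint endpoints in `{1,…,n}`, no two pairs crossing)
of a subset of `{1,…,n}`, together with a set `T` of marked vertices disjoint from the
endpoints, with `|T| + |τ| = k`. -/
def IsPNP (k n : ℕ) (τ : Finset (ℕ × ℕ)) (T : Finset ℕ) : Prop :=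
  (∀ p ∈ τ, p.1 < p.2 ∧ p.1 ∈ Finset.Icc 1 n ∧ p.2 ∈ Finset.Icc 1 n) ∧
  T ⊆ Finset.Icc 1 n ∧
  (∀ p ∈ τ, ∀ q ∈ τ, p ≠ q → p.1 ≠ q.1 ∧ p.1 ≠ q.2 ∧ p.2 ≠ q.1 ∧ p.2 ≠ q.2) ∧
  (∀ p ∈ τ, p.1 ∉ T ∧ p.2 ∉ T) ∧
  (∀ p ∈ τ, ∀ q ∈ τ, ¬(p.1 < q.1 ∧ q.1 < p.2 ∧ p.2 < q.2)) ∧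
  T.card + τ.card = k

/-- The map `θ` from partial noncrossing pairings to pairs of `k`-subsets:
`I₁ = T ∪ {smaller endpoints}`, `I₂ = T ∪ {larger endpoints}`. -/
def theta (τ : Finset (ℕ × ℕ)) (T : Finset ℕ) : Finset ℕ × Finset ℕ :=
  (T ∪ τ.image Prod.fst, T ∪ τ.image Prod.snd)

/-- `(I,J)` is a standard pair of `k`-subsets of `{1,…,n}`: the `r`-th smallest element
of `I` is at most the `r`-th smallest element of `J` for all `r` (so `I` and `J` form
the two columns of a semistandard tableau of shape `2^k`). -/
def IsStandardPair (k n : ℕ) (I J : Finset ℕ) : Prop :=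
  I.card = k ∧ J.card = k ∧ I ⊆ Finset.Icc 1 n ∧ J ⊆ Finset.Icc 1 n ∧
  ∀ r, r < k → (I.sort (· ≤ ·)).getD r 0 ≤ (J.sort (· ≤ ·)).getD r 0

/-- `τ` is the partial noncrossing matching `θ⁻¹(I,J)` associated to the pair `(I,J)`:
the marked vertices are `I ∩ J`, and `θ` sends `(τ, I ∩ J)` to `(I,J)`. -/
def Matching (k n : ℕ) (I J : Finset ℕ) (τ : Finset (ℕ × ℕ)) : Prop :=
  IsPNP k n τ (I ∩ J) ∧ (I ∩ J) ∪ τ.image Prod.fst = I ∧ (I ∩ J) ∪ τ.image Prod.snd = J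

/-- The elements of a `k`-subset listed in increasing order, as a tuple. -/
def sortedTuple (k : ℕ) (I : Finset ℕ) : Fin k → ℕ := fun r =>
  (I.sort (· ≤ ·)).getD (r : ℕ) 0

/-- Componentwise (Gale) order on `k`-subsets: the `r`-th smallest element of `I` is at
most the `r`-th smallest element of `C` for all `r < k`. -/
def FLe (k : ℕ) (I C : Finset ℕ) : Prop :=
  ∀ r, r < k → (I.sort (· ≤ ·)).getD r 0 ≤ (C.sort (· ≤ ·)).getD r 0

/-- One swap step `(𝐈,J) →_a (𝐈',J')`: for a strand `(i_a, j)` of the matching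
`τ(𝐈,J)` (with `i_a` the `a`-th entry of the tuple `𝐈`), replace `i_a` by `j` in the
tuple and `j` by `i_a` in `J`, provided the resulting pair is standard. -/
def Step (k n : ℕ) (a : Fin k) (p q : (Fin k → ℕ) × Finset ℕ) : Prop :=
  ∃ τ j, Matching k n (Finset.univ.image p.1) p.2 τ ∧ (p.1 a, j) ∈ τ ∧
    q.1 = Function.update p.1 a j ∧ q.2 = insert (p.1 a) (p.2.erase j) ∧
    IsStandardPair k n (Finset.univ.image q.1) q.2

/-- A legal path: a sequence of swap steps with weakly decreasing indices
`a_1 ≥ a_2 ≥ ⋯ ≥ a_r`, recorded by its list of states and its list of indices. -/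
def IsLegalPath (k n : ℕ) (states : List ((Fin k → ℕ) × Finset ℕ))
    (idxs : List (Fin k)) : Prop :=
  states.length = idxs.length + 1 ∧
  (∀ t a p q, idxs[t]? = some a → states[t]? = some p →
    states[t + 1]? = some q → Step k n a p q) ∧
  idxs.Chain' (fun a b => b ≤ a)

namespace Stmt15Aux
open Finset
/-- the basic "niceness" of a matching: pairs increasing, pairwise distinct
endpoints, noncrossing. -/
def Nice (τ : Finset (ℕ × ℕ)) : Prop :=
  (∀ p ∈ τ, p.1 < p.2) ∧
  (∀ p ∈ τ, ∀ q ∈ τ, p ≠ q → p.1 ≠ q.1 ∧ p.1 ≠ q.2 ∧ p.2 ≠ q.1 ∧ p.2 ≠ q.2) ∧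
  (∀ p ∈ τ, ∀ q ∈ τ, ¬(p.1 < q.1 ∧ q.1 < p.2 ∧ p.2 < q.2))

lemma no_lt : ∀ (N : ℕ) (τ1 τ2 : Finset (ℕ × ℕ)), Nice τ1 → Nice τ2 →
    τ1.image Prod.fst = τ2.image Prod.fst → τ1.image Prod.snd = τ2.image Prod.snd →
    ∀ x y1 y2, (x, y1) ∈ τ1 → (x, y2) ∈ τ2 → y1 < y2 → y2 - x ≤ N → False := by
  intro N
  induction N with
  | zero =>
    intro τ1 τ2 h1 h2 hf hs x y1 y2 m1 m2 hlt hm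
    have hx : x < y2 := h2.1 _ m2
    omega
  | succ N ih =>
    intro τ1 τ2 h1 h2 hf hs x y1 y2 m1 m2 hlt hm
    have hxy1 : x < y1 := h1.1 _ m1
    have hy1 : y1 ∈ τ2.image Prod.snd := by
      rw [← hs]; exact mem_image_of_mem _ m1
    obtain ⟨s, hs2, hsy⟩ := mem_image.mp hy1
    have hu : s.1 ≠ x := by
      intro h
      have hne : s ≠ (x, y2) := by
        intro he; rw [he] at hsy; simp at hsy; omega
      exact (h2.2.1 s hs2 (x, y2) m2 hne).1 (by simpa using h)
    have hux : x < s.1 := by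
      rcases lt_or_gt_of_ne hu with h | h
      · exact absurd ⟨h, hsy ▸ hxy1, hsy ▸ hlt⟩ (h2.2.2 s hs2 (x, y2) m2)
      · exact h
    have hs1y1 : s.1 < y1 := hsy ▸ h2.1 s hs2
    have hu1 : s.1 ∈ τ1.image Prod.fst := by
      rw [hf]; exact mem_image_of_mem _ hs2
    obtain ⟨t, ht1, htu⟩ := mem_image.mp hu1
    have htne : t ≠ (x, y1) := by
      intro he; rw [he] at htu; simp at htu; omega
    have ht2 : t.2 ≠ y1 := (h1.2.1 t ht1 (x, y1) m1 htne).2.2.2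
    have ht2lt : t.2 < y1 := by
      rcases lt_or_gt_of_ne ht2 with h | h
      · exact h
      · exact absurd ⟨htu ▸ hux, htu ▸ hs1y1, h⟩ (h1.2.2 (x, y1) m1 t ht1)
    have hm1' : (s.1, t.2) ∈ τ1 := by
      have : t = (s.1, t.2) := by rw [← htu]
      rwa [this] at ht1
    have hm2' : (s.1, y1) ∈ τ2 := by
      have : s = (s.1, y1) := by rw [← hsy]
      rwa [this] at hs2
    exact ih τ1 τ2 h1 h2 hf hs s.1 t.2 y1 hm1' hm2' ht2lt (by omega)

lemma partner_eq {τ1 τ2 : Finset (ℕ × ℕ)} (h1 : Nice τ1) (h2 : Nice τ2)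
    (hf : τ1.image Prod.fst = τ2.image Prod.fst)
    (hs : τ1.image Prod.snd = τ2.image Prod.snd)
    {x y1 y2 : ℕ} (m1 : (x, y1) ∈ τ1) (m2 : (x, y2) ∈ τ2) : y1 = y2 := by
  rcases lt_trichotomy y1 y2 with h | h | h
  · exact absurd h (fun h => no_lt (y2 - x) τ1 τ2 h1 h2 hf hs x y1 y2 m1 m2 h le_rfl)
  · exact h
  · exact absurd h (fun h => no_lt (y1 - x) τ2 τ1 h2 h1 hf.symm hs.symm x y2 y1 m2 m1 h le_rfl)

lemma nice_unique {τ1 τ2 : Finset (ℕ × ℕ)} (h1 : Nice τ1) (h2 : Nice τ2)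
    (hf : τ1.image Prod.fst = τ2.image Prod.fst)
    (hs : τ1.image Prod.snd = τ2.image Prod.snd) : τ1 = τ2 := by
  ext ⟨x, y⟩
  constructor
  · intro hm
    have hx : x ∈ τ2.image Prod.fst := by
      rw [← hf]; exact mem_image_of_mem _ hm
    obtain ⟨s, hs2, hsx⟩ := mem_image.mp hx
    have hse : s = (x, s.2) := by rw [← hsx]
    have := partner_eq h1 h2 hf hs hm (hse ▸ hs2)
    rw [hse] at hs2; rwa [← this] at hs2
  · intro hm
    have hx : x ∈ τ1.image Prod.fst := by
      rw [hf]; exact mem_image_of_mem _ hm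
    obtain ⟨s, hs2, hsx⟩ := mem_image.mp hx
    have hse : s = (x, s.2) := by rw [← hsx]
    have := partner_eq h2 h1 hf.symm hs.symm hm (hse ▸ hs2)
    rw [hse] at hs2; rwa [← this] at hs2

lemma snd_inter_Iic (τ : Finset (ℕ × ℕ))
    (hd : ∀ p ∈ τ, ∀ q ∈ τ, p ≠ q → p.1 ≠ q.1 ∧ p.1 ≠ q.2 ∧ p.2 ≠ q.1 ∧ p.2 ≠ q.2)
    (v : ℕ) :
    ((τ.image Prod.snd) ∩ Finset.Iic v).card = (τ.filter (fun s => s.2 ≤ v)).card := by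
  have h1 : (τ.image Prod.snd) ∩ Finset.Iic v
      = (τ.filter (fun s => s.2 ≤ v)).image Prod.snd := by
    ext z
    simp only [mem_inter, mem_image, mem_Iic, mem_filter]
    constructor
    · rintro ⟨⟨s, hsτ, rfl⟩, hz⟩; exact ⟨s, ⟨hsτ, hz⟩, rfl⟩
    · rintro ⟨s, ⟨hsτ, hz⟩, rfl⟩; exact ⟨⟨s, hsτ, rfl⟩, hz⟩
  rw [h1]
  apply Finset.card_image_of_injOn
  intro s hsm t htm he
  simp only [coe_filter, Set.mem_setOf_eq] at hsm htm
  by_contra hne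
  exact (hd s hsm.1 t htm.1 hne).2.2.2 he

lemma fst_inter_Iic (τ : Finset (ℕ × ℕ))
    (hd : ∀ p ∈ τ, ∀ q ∈ τ, p ≠ q → p.1 ≠ q.1 ∧ p.1 ≠ q.2 ∧ p.2 ≠ q.1 ∧ p.2 ≠ q.2)
    (v : ℕ) :
    ((τ.image Prod.fst) ∩ Finset.Iic v).card = (τ.filter (fun s => s.1 ≤ v)).card := by
  have h1 : (τ.image Prod.fst) ∩ Finset.Iic v
      = (τ.filter (fun s => s.1 ≤ v)).image Prod.fst := by
    ext z
    simp only [mem_inter, mem_image, mem_Iic, mem_filter]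
    constructor
    · rintro ⟨⟨s, hsτ, rfl⟩, hz⟩; exact ⟨s, ⟨hsτ, hz⟩, rfl⟩
    · rintro ⟨s, ⟨hsτ, hz⟩, rfl⟩; exact ⟨⟨s, hsτ, rfl⟩, hz⟩
  rw [h1]
  apply Finset.card_image_of_injOn
  intro s hsm t htm he
  simp only [coe_filter, Set.mem_setOf_eq] at hsm htm
  by_contra hne
  exact (hd s hsm.1 t htm.1 hne).1 he

/-- counting: snd endpoints up to `v` are at most fst endpoints up to `v`. -/
lemma count_key (τ : Finset (ℕ × ℕ)) (hlt : ∀ p ∈ τ, p.1 < p.2)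
    (hd : ∀ p ∈ τ, ∀ q ∈ τ, p ≠ q → p.1 ≠ q.1 ∧ p.1 ≠ q.2 ∧ p.2 ≠ q.1 ∧ p.2 ≠ q.2)
    (v : ℕ) :
    ((τ.image Prod.snd) ∩ Finset.Iic v).card ≤ ((τ.image Prod.fst) ∩ Finset.Iic v).card := by
  rw [snd_inter_Iic τ hd v, fst_inter_Iic τ hd v]
  apply Finset.card_le_card
  intro s hsm
  simp only [mem_filter] at hsm ⊢
  exact ⟨hsm.1, le_trans (le_of_lt (hlt s hsm.1)) hsm.2⟩

def Mono (k : ℕ) (f : Fin k → ℕ) (m : ℕ) : Prop :=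
  ∀ a b : Fin k, a < b → (a : ℕ) < m → f a < f b

section facts
variable {k n : ℕ} {I J : Finset ℕ} {τ : Finset (ℕ × ℕ)}

lemma matching_fst_eq (h : Matching k n I J τ) :
    τ.image Prod.fst = I \ (I ∩ J) := by
  obtain ⟨⟨_, _, _, hTd, _, _⟩, hfst, _⟩ := h
  ext z
  simp only [mem_sdiff]
  constructor
  · intro hz
    obtain ⟨s, hsτ, rfl⟩ := mem_image.mp hz
    exact ⟨by rw [← hfst]; exact mem_union_right _ (mem_image_of_mem _ hsτ),
      (hTd s hsτ).1⟩
  · rintro ⟨hzI, hzT⟩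
    rw [← hfst] at hzI
    rcases mem_union.mp hzI with h | h
    · exact absurd h hzT
    · exact h

lemma matching_snd_eq (h : Matching k n I J τ) :
    τ.image Prod.snd = J \ (I ∩ J) := by
  obtain ⟨⟨_, _, _, hTd, _, _⟩, _, hsnd⟩ := h
  ext z
  simp only [mem_sdiff]
  constructor
  · intro hz
    obtain ⟨s, hsτ, rfl⟩ := mem_image.mp hz
    exact ⟨by rw [← hsnd]; exact mem_union_right _ (mem_image_of_mem _ hsτ),
      (hTd s hsτ).2⟩
  · rintro ⟨hzJ, hzT⟩
    rw [← hsnd] at hzJ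
    rcases mem_union.mp hzJ with h | h
    · exact absurd h hzT
    · exact h

lemma matching_card_fst (h : Matching k n I J τ) : I.card = k := by
  obtain ⟨⟨_, _, hd, hTd, _, hcard⟩, hfst, _⟩ := h
  have hdisj : Disjoint (I ∩ J) (τ.image Prod.fst) := by
    rw [Finset.disjoint_left]
    intro z hzT hzF
    obtain ⟨s, hsτ, rfl⟩ := mem_image.mp hzF
    exact (hTd s hsτ).1 hzT
  have himg : (τ.image Prod.fst).card = τ.card := by
    apply Finset.card_image_of_injOn
    intro s hsm t htm he
    by_contra hne
    exact (hd s hsm t htm hne).1 he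
  rw [← hfst, Finset.card_union_of_disjoint hdisj, himg]
  exact hcard

lemma image_update {k : ℕ} (f : Fin k → ℕ) (c : Fin k) (j : ℕ)
    (hinj : Function.Injective f) :
    Finset.univ.image (Function.update f c j)
      = insert j ((Finset.univ.image f).erase (f c)) := by
  ext z
  simp only [mem_image, mem_univ, true_and, mem_insert, mem_erase]
  constructor
  · rintro ⟨a, rfl⟩
    by_cases hac : a = c
    · subst hac; left; simp
    · right
      rw [Function.update_of_ne hac]
      exact ⟨fun he => hac (hinj he), ⟨a, rfl⟩⟩
  · rintro (rfl | ⟨hne, a, rfl⟩)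
    · exact ⟨c, by simp⟩
    · have hac : a ≠ c := fun h => hne (by rw [h])
      exact ⟨a, by rw [Function.update_of_ne hac]⟩

end facts

def NoNest (k n : ℕ) (p : (Fin k → ℕ) × Finset ℕ) : Prop :=
  ∀ a b : Fin k, a < b → ∀ (τ : Finset (ℕ × ℕ)) (j j' : ℕ),
    Matching k n (Finset.univ.image p.1) p.2 τ →
    (p.1 a, j) ∈ τ → (p.1 b, j') ∈ τ →
    ¬(p.1 b < p.1 a ∧ p.1 a < j ∧ j < j')

set_option maxHeartbeats 2000000 in
lemma step_preserves {k n : ℕ} {c : Fin k} {p q : (Fin k → ℕ) × Finset ℕ} {m : ℕ}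
    (hstep : Step k n c p q) (hcm : (c : ℕ) ≤ m)
    (hmono : Mono k p.1 m) (hP : NoNest k n p) :
    Mono k q.1 (c : ℕ) ∧ NoNest k n q := by
  classical
  obtain ⟨τ, j, hM, hij, hq1, hq2, -⟩ := hstep
  have hM' := hM
  set I : Finset ℕ := Finset.univ.image p.1 with hIdef
  set J : Finset ℕ := p.2 with hJdef
  set T : Finset ℕ := I ∩ J with hTdef
  obtain ⟨⟨hlt, hTsub, hd, hTd, hnc, hcard⟩, hfstu, hsndu⟩ := hM
  set i : ℕ := p.1 c with hidef
  have hijlt : i < j := (hlt _ hij).1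
  have hfsts : τ.image Prod.fst = I \ T := matching_fst_eq hM'
  have hsnds : τ.image Prod.snd = J \ T := matching_snd_eq hM'
  have hiI : i ∈ I := mem_image_of_mem _ (mem_univ c)
  have hjT : j ∉ T := (hTd _ hij).2
  have hiT : i ∉ T := (hTd _ hij).1
  have hjI : j ∉ I := by
    intro hj
    have : j ∈ I \ T := mem_sdiff.mpr ⟨hj, hjT⟩
    rw [← hfsts] at this
    obtain ⟨s, hsτ, hsj⟩ := mem_image.mp this
    have hne : s ≠ (i, j) := by
      intro he; rw [he] at hsj; simp at hsj; omega
    exact (hd s hsτ (i, j) hij hne).2.1 hsj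
  have hiJ : i ∉ J := by
    intro hi
    have : i ∈ J \ T := mem_sdiff.mpr ⟨hi, hiT⟩
    rw [← hsnds] at this
    obtain ⟨s, hsτ, hsi⟩ := mem_image.mp this
    have hne : s ≠ (i, j) := by
      intro he; rw [he] at hsi; simp at hsi; omega
    exact (hd s hsτ (i, j) hij hne).2.2.1 hsi
  have hjJ : j ∈ J := by
    have : j ∈ J \ T := by
      rw [← hsnds]; exact mem_image_of_mem _ hij
    exact (mem_sdiff.mp this).1
  have hIcard : I.card = k := matching_card_fst hM'
  have hpinj : Function.Injective p.1 := by
    have h1 : (Finset.univ.image p.1).card = (Finset.univ : Finset (Fin k)).card := by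
      rw [hIcard, Finset.card_univ, Fintype.card_fin]
    have := Finset.injOn_of_card_image_eq (s := (Finset.univ : Finset (Fin k))) h1
    intro a b hab
    exact this (mem_coe.mpr (mem_univ a)) (mem_coe.mpr (mem_univ b)) hab
  have hI' : Finset.univ.image q.1 = insert j (I.erase i) := by
    rw [hq1]; exact image_update p.1 c j hpinj
  have hT' : (Finset.univ.image q.1) ∩ q.2 = T := by
    ext z
    rw [hI', hq2]
    simp only [mem_inter, mem_insert, mem_erase]
    constructor
    · rintro ⟨hz1 | ⟨hzi, hzI⟩, hz2 | ⟨hzj, hzJ⟩⟩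
      · omega
      · exact absurd hz1 hzj
      · exact absurd hz2 hzi
      · exact mem_inter.mpr ⟨hzI, hzJ⟩
    · intro hz
      have hzI : z ∈ I := (mem_inter.mp hz).1
      have hzJ : z ∈ J := (mem_inter.mp hz).2
      have hzi : z ≠ i := fun h => hiT (h ▸ hz)
      have hzj : z ≠ j := fun h => hjT (h ▸ hz)
      exact ⟨Or.inr ⟨hzi, hzI⟩, Or.inr ⟨hzj, hzJ⟩⟩
  have hqc : q.1 c = j := by rw [hq1]; simp
  have hqnc : ∀ t : Fin k, t ≠ c → q.1 t = p.1 t := by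
    intro t ht; rw [hq1]; exact Function.update_of_ne ht _ _
  have hmono' : Mono k q.1 (c : ℕ) := by
    intro a b hab hac
    have hanec : a ≠ c := by
      intro h; rw [h] at hac; omega
    rw [hqnc a hanec]
    by_cases hbc : b = c
    · subst hbc
      rw [hqc]
      have : p.1 a < p.1 b := hmono a b hab (by omega)
      omega
    · rw [hqnc b hbc]
      exact hmono a b hab (by omega)
  refine ⟨hmono', ?_⟩
  intro a b hab τ2 j1 j2 hM2 ha hb hcon
  have hM2' := hM2
  obtain ⟨⟨hlt2, -, hd2, hTd2, hnc2, hcard2⟩, hfstu2, hsndu2⟩ := hM2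
  have hfsts2 : τ2.image Prod.fst = (insert j (I.erase i)) \ T := by
    rw [matching_fst_eq hM2', hT', hI']
  have hsnds2 : τ2.image Prod.snd = (insert i (J.erase j)) \ T := by
    rw [matching_snd_eq hM2', hT', hq2]
  have hA2 : (τ2.image Prod.fst) ∩ Finset.Iic i = ((I \ T) ∩ Finset.Iic i).erase i := by
    rw [hfsts2]
    ext z
    simp only [mem_inter, mem_sdiff, mem_Iic, mem_insert, mem_erase]
    constructor
    · rintro ⟨⟨rfl | ⟨hzi, hzI⟩, hzT⟩, hzle⟩
      · omega
      · exact ⟨hzi, ⟨⟨hzI, hzT⟩, hzle⟩⟩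
    · rintro ⟨hzi, ⟨⟨hzI, hzT⟩, hzle⟩⟩
      exact ⟨⟨Or.inr ⟨hzi, hzI⟩, hzT⟩, hzle⟩
  have hB2 : (τ2.image Prod.snd) ∩ Finset.Iic i = insert i ((J \ T) ∩ Finset.Iic i) := by
    rw [hsnds2]
    ext z
    simp only [mem_inter, mem_sdiff, mem_Iic, mem_insert, mem_erase]
    constructor
    · rintro ⟨⟨rfl | ⟨hzj, hzJ⟩, hzT⟩, hzle⟩
      · exact Or.inl rfl
      · exact Or.inr ⟨⟨hzJ, hzT⟩, hzle⟩
    · rintro (rfl | ⟨⟨hzJ, hzT⟩, hzle⟩)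
      · exact ⟨⟨Or.inl rfl, hiT⟩, le_refl _⟩
      · have hzj : z ≠ j := by intro h; omega
        exact ⟨⟨Or.inr ⟨hzj, hzJ⟩, hzT⟩, hzle⟩
  have hcnt := count_key τ2 (fun s hs => (hlt2 s hs).1) hd2 i
  rw [hA2, hB2] at hcnt
  have hiA : i ∈ (I \ T) ∩ Finset.Iic i := by
    simp only [mem_inter, mem_sdiff, mem_Iic]
    exact ⟨⟨hiI, hiT⟩, le_refl _⟩
  have hiB : i ∉ (J \ T) ∩ Finset.Iic i := by
    simp only [mem_inter, mem_sdiff, mem_Iic]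
    rintro ⟨⟨h, _⟩, _⟩; exact hiJ h
  rw [Finset.card_erase_of_mem hiA, Finset.card_insert_of_notMem hiB] at hcnt
  have hAeq : (I \ T) ∩ Finset.Iic i = (τ.image Prod.fst) ∩ Finset.Iic i := by rw [hfsts]
  have hBeq : (J \ T) ∩ Finset.Iic i = (τ.image Prod.snd) ∩ Finset.Iic i := by rw [hsnds]
  rw [hAeq, hBeq, fst_inter_Iic τ hd i, snd_inter_Iic τ hd i] at hcnt
  set F1 := τ.filter (fun s => s.1 ≤ i) with hF1
  set F2 := τ.filter (fun s => s.2 ≤ i) with hF2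
  have hF21 : F2 ⊆ F1 := by
    intro s hs
    simp only [hF1, hF2, mem_filter] at hs ⊢
    exact ⟨hs.1, le_trans (le_of_lt (hlt s hs.1).1) hs.2⟩
  have hdiff2 : 1 < (F1 \ F2).card := by
    rw [Finset.card_sdiff_of_subset hF21]
    have hle := Finset.card_le_card hF21
    omega
  obtain ⟨s, hsF, hsne⟩ := Finset.exists_mem_ne hdiff2 (i, j)
  simp only [mem_sdiff, hF1, hF2, mem_filter, not_and] at hsF
  have hsτ : s ∈ τ := hsF.1.1
  have hs1 : s.1 ≤ i := hsF.1.2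
  have hs2 : ¬ s.2 ≤ i := hsF.2 hsτ
  have hs1i : s.1 < i := by
    have := (hd s hsτ (i, j) hij hsne).1
    omega
  have hs2j : j < s.2 := by
    have h1 := (hd s hsτ (i, j) hij hsne).2.2.2
    have h2 := hnc s hsτ (i, j) hij
    simp only [not_and] at h2
    by_contra hle
    exact (h2 hs1i (by omega)) (by omega)
  have hEne : (τ.filter (fun s => s.1 < i ∧ j < s.2)).Nonempty :=
    ⟨s, by simp only [mem_filter]; exact ⟨hsτ, hs1i, hs2j⟩⟩
  obtain ⟨s0, hs0E, hs0max⟩ :=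
    Finset.exists_max_image (τ.filter (fun s => s.1 < i ∧ j < s.2)) Prod.fst hEne
  simp only [mem_filter] at hs0E
  set x : ℕ := s0.1 with hxdef
  set y : ℕ := s0.2 with hydef
  have hxyτ : (x, y) ∈ τ := hs0E.1
  have hxi : x < i := hs0E.2.1
  have hjy : j < y := hs0E.2.2
  have hxyij : (x, y) ≠ (i, j) := by intro h; simp at h; omega
  have hinner : ∀ s' ∈ τ, s'.1 < i → j < s'.2 → s' ≠ (x, y) → s'.1 < x ∧ y < s'.2 := by
    intro s' hs' h1 h2 hne
    have hle : s'.1 ≤ x := hs0max s' (by simp only [mem_filter]; exact ⟨hs', h1, h2⟩)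
    have hne1 : s'.1 ≠ x := (hd s' hs' (x, y) hxyτ hne).1
    have h1x : s'.1 < x := by omega
    have hne2 : s'.2 ≠ y := (hd s' hs' (x, y) hxyτ hne).2.2.2
    have h2y : y < s'.2 := by
      have := hnc s' hs' (x, y) hxyτ
      simp only [not_and] at this
      by_contra hc
      exact (this h1x (by omega)) (by omega)
    exact ⟨h1x, h2y⟩
  -- the surgered matching
  set σ : Finset (ℕ × ℕ) :=
    insert (x, i) (insert (j, y) ((τ.erase (i, j)).erase (x, y))) with hσdef
  have hmemσ : ∀ s', s' ∈ σ ↔ s' = (x, i) ∨ s' = (j, y) ∨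
      (s' ∈ τ ∧ s' ≠ (i, j) ∧ s' ≠ (x, y)) := by
    intro s'
    simp only [hσdef, mem_insert, mem_erase]
    tauto
  have hold : ∀ s' ∈ τ, s' ≠ (i, j) → s' ≠ (x, y) →
      s'.1 ≠ i ∧ s'.1 ≠ j ∧ s'.2 ≠ i ∧ s'.2 ≠ j ∧
      s'.1 ≠ x ∧ s'.1 ≠ y ∧ s'.2 ≠ x ∧ s'.2 ≠ y := by
    intro s' hs' h1 h2
    obtain ⟨a1, a2, a3, a4⟩ := hd s' hs' (i, j) hij h1
    obtain ⟨b1, b2, b3, b4⟩ := hd s' hs' (x, y) hxyτ h2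
    exact ⟨a1, a2, a3, a4, b1, b2, b3, b4⟩
  have hNσ : Nice σ := by
    refine ⟨?_, ?_, ?_⟩
    · intro s' hs'
      rcases (hmemσ s').mp hs' with rfl | rfl | ⟨h, -, -⟩
      · exact hxi
      · exact hjy
      · exact (hlt _ h).1
    · intro s' hs' t ht hne
      rcases (hmemσ s').mp hs' with rfl | rfl | ⟨h1, h2, h3⟩ <;>
        rcases (hmemσ t).mp ht with rfl | rfl | ⟨g1, g2, g3⟩
      · exact absurd rfl hne
      · refine ⟨by omega, by omega, by omega, by omega⟩
      · obtain ⟨e1, e2, e3, e4, e5, e6, e7, e8⟩ := hold _ g1 g2 g3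
        refine ⟨by omega, by omega, by omega, by omega⟩
      · refine ⟨by omega, by omega, by omega, by omega⟩
      · exact absurd rfl hne
      · obtain ⟨e1, e2, e3, e4, e5, e6, e7, e8⟩ := hold _ g1 g2 g3
        refine ⟨by omega, by omega, by omega, by omega⟩
      · obtain ⟨e1, e2, e3, e4, e5, e6, e7, e8⟩ := hold _ h1 h2 h3
        refine ⟨by omega, by omega, by omega, by omega⟩
      · obtain ⟨e1, e2, e3, e4, e5, e6, e7, e8⟩ := hold _ h1 h2 h3
        refine ⟨by omega, by omega, by omega, by omega⟩
      · exact hd _ h1 _ g1 hne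
    · intro s' hs' t ht
      rcases (hmemσ s').mp hs' with rfl | rfl | ⟨h1, h2, h3⟩ <;>
        rcases (hmemσ t).mp ht with rfl | rfl | ⟨g1, g2, g3⟩
      · simp only [not_and]; intro h; omega
      · simp only [not_and]; intro h; omega
      · -- (x,i) vs old t
        rintro ⟨c1, c2, c3⟩
        obtain ⟨e1, e2, e3, e4, e5, e6, e7, e8⟩ := hold _ g1 g2 g3
        have e9 : t.2 < y := by
          have := hnc (x, y) hxyτ t g1
          simp only [not_and] at this
          by_contra hcc
          exact (this c1 (by omega)) (by omega)
        have e10 : j < t.2 := by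
          have := hnc t g1 (i, j) hij
          simp only [not_and] at this
          by_contra hcc
          exact (this c2 (by omega)) (by omega)
        have := (hinner t g1 c2 e10 g3).1
        omega
      · simp only [not_and]; intro h; omega
      · simp only [not_and]; intro h; omega
      · -- (j,y) vs old t
        rintro ⟨c1, c2, c3⟩
        exact hnc (x, y) hxyτ t g1 ⟨by omega, c2, c3⟩
      · -- old t vs (x,i)
        rintro ⟨c1, c2, c3⟩
        exact hnc s' h1 (x, y) hxyτ ⟨c1, c2, by omega⟩
      · -- old s' vs (j,y)
        rintro ⟨c1, c2, c3⟩
        obtain ⟨e1, e2, e3, e4, e5, e6, e7, e8⟩ := hold _ h1 h2 h3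
        by_cases hcc : s'.1 < i
        · have := (hinner s' h1 hcc (by omega) h3).2
          omega
        · exact hnc (i, j) hij s' h1 ⟨by omega, by omega, by omega⟩
      · exact hnc _ h1 _ g1
  -- image equalities
  have hxIT : x ∈ I \ T := by
    rw [← hfsts]; exact mem_image_of_mem _ hxyτ
  have hyJT : y ∈ J \ T := by
    rw [← hsnds]; exact mem_image_of_mem _ hxyτ
  have hfstσ : σ.image Prod.fst = τ2.image Prod.fst := by
    rw [hfsts2]
    ext z
    simp only [mem_image, mem_sdiff, mem_insert, mem_erase]
    constructor
    · rintro ⟨s', hs', rfl⟩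
      rcases (hmemσ s').mp hs' with rfl | rfl | ⟨h1, h2, h3⟩
      · exact ⟨Or.inr ⟨by omega, (mem_sdiff.mp hxIT).1⟩, (mem_sdiff.mp hxIT).2⟩
      · exact ⟨Or.inl rfl, hjT⟩
      · obtain ⟨e1, e2, e3, e4, e5, e6, e7, e8⟩ := hold _ h1 h2 h3
        have hz : s'.1 ∈ I \ T := by
          rw [← hfsts]; exact mem_image_of_mem _ h1
        exact ⟨Or.inr ⟨e1, (mem_sdiff.mp hz).1⟩, (mem_sdiff.mp hz).2⟩
    · rintro ⟨hz1 | ⟨hzi, hzI⟩, hzT⟩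
      · exact ⟨(j, y), (hmemσ _).mpr (Or.inr (Or.inl rfl)), hz1.symm⟩
      · have : z ∈ τ.image Prod.fst := by
          rw [hfsts]; exact mem_sdiff.mpr ⟨hzI, hzT⟩
        obtain ⟨s', hs', hz⟩ := mem_image.mp this
        by_cases h1 : s' = (i, j)
        · rw [h1] at hz; exact absurd hz.symm hzi
        by_cases h2 : s' = (x, y)
        · rw [h2] at hz
          exact ⟨(x, i), (hmemσ _).mpr (Or.inl rfl), hz⟩
        · exact ⟨s', (hmemσ _).mpr (Or.inr (Or.inr ⟨hs', h1, h2⟩)), hz⟩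
  have hsndσ : σ.image Prod.snd = τ2.image Prod.snd := by
    rw [hsnds2]
    ext z
    simp only [mem_image, mem_sdiff, mem_insert, mem_erase]
    constructor
    · rintro ⟨s', hs', rfl⟩
      rcases (hmemσ s').mp hs' with rfl | rfl | ⟨h1, h2, h3⟩
      · exact ⟨Or.inl rfl, hiT⟩
      · exact ⟨Or.inr ⟨by omega, (mem_sdiff.mp hyJT).1⟩, (mem_sdiff.mp hyJT).2⟩
      · obtain ⟨e1, e2, e3, e4, e5, e6, e7, e8⟩ := hold _ h1 h2 h3
        have hz : s'.2 ∈ J \ T := by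
          rw [← hsnds]; exact mem_image_of_mem _ h1
        exact ⟨Or.inr ⟨e4, (mem_sdiff.mp hz).1⟩, (mem_sdiff.mp hz).2⟩
    · rintro ⟨hz1 | ⟨hzj, hzJ⟩, hzT⟩
      · exact ⟨(x, i), (hmemσ _).mpr (Or.inl rfl), hz1.symm⟩
      · have : z ∈ τ.image Prod.snd := by
          rw [hsnds]; exact mem_sdiff.mpr ⟨hzJ, hzT⟩
        obtain ⟨s', hs', hz⟩ := mem_image.mp this
        by_cases h1 : s' = (i, j)
        · rw [h1] at hz; exact absurd hz.symm hzj
        by_cases h2 : s' = (x, y)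
        · rw [h2] at hz
          exact ⟨(j, y), (hmemσ _).mpr (Or.inr (Or.inl rfl)), hz⟩
        · exact ⟨s', (hmemσ _).mpr (Or.inr (Or.inr ⟨hs', h1, h2⟩)), hz⟩
  have hN2 : Nice τ2 := ⟨fun s hs => (hlt2 s hs).1, hd2, hnc2⟩
  have hτ2σ : τ2 = σ := nice_unique hN2 hNσ hfstσ.symm hsndσ.symm
  rw [hτ2σ] at ha hb
  -- final case analysis
  by_cases hac : (a : ℕ) < (c : ℕ)
  · have := hmono' a b hab hac
    omega
  have habn : (a : ℕ) < (b : ℕ) := hab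
  have hbc : b ≠ c := by
    intro h
    rw [h] at habn
    omega
  have hqb : q.1 b = p.1 b := hqnc b hbc
  have hpbI : p.1 b ∈ I := mem_image_of_mem _ (mem_univ b)
  rcases (hmemσ _).mp hb with hB | hB | hB
  · -- b-strand is (x, i)
    rw [Prod.mk.injEq] at hB
    obtain ⟨hb1, hb2⟩ := hB
    by_cases hac2 : a = c
    · rw [hac2, hqc] at hcon
      omega
    · have hqa : q.1 a = p.1 a := hqnc a hac2
      rcases (hmemσ _).mp ha with hA | hA | hA
      · rw [Prod.mk.injEq] at hA
        omega
      · rw [Prod.mk.injEq] at hA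
        rw [hqa] at hA
        exact hjI (hA.1 ▸ mem_image_of_mem _ (mem_univ a))
      · -- a old: strands (p.1 a, j1), (x, y); j2 = i
        rw [hqa] at hA
        have hxyb : (p.1 b, y) ∈ τ := by
          rw [hqb] at hb1; rw [hb1]; exact hxyτ
        refine hP a b hab τ j1 y hM' hA.1 hxyb ⟨?_, ?_, ?_⟩
        · rw [hqb] at hb1; rw [hb1]; rw [hqa] at hcon; omega
        · rw [hqa] at hcon; omega
        · rw [hqa] at hcon; omega
  · -- b-strand is (j, y): p.1 b = j ∈ I, contradiction
    rw [Prod.mk.injEq] at hB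
    rw [hqb] at hB
    exact hjI (hB.1 ▸ hpbI)
  · -- b-strand old
    obtain ⟨hBτ, hBij, hBxy⟩ := hB
    rw [hqb] at hBτ hBij hBxy
    by_cases hac2 : a = c
    · have hqa : q.1 a = j := by rw [hac2, hqc]
      rcases (hmemσ _).mp ha with hA | hA | hA
      · rw [Prod.mk.injEq, hqa] at hA
        omega
      · rw [Prod.mk.injEq, hqa] at hA
        -- j1 = y; strands (i,j) and (p.1 b, j2) nested in τ
        have hpbi : p.1 b ≠ i := by
          intro h
          exact hbc (hpinj (h.trans rfl))
        have hpbl : p.1 b < i := by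
          rcases lt_or_gt_of_ne hpbi with h | h
          · exact h
          · exfalso
            rw [hqa] at hcon
            refine hnc (i, j) hij (p.1 b, j2) hBτ ⟨h, by omega, by omega⟩
        have hcb : c < b := hac2 ▸ hab
        refine hP c b hcb τ j j2 hM' hij hBτ ⟨hpbl, hijlt, ?_⟩
        rw [hqa] at hcon
        omega
      · exfalso
        have : q.1 a ∈ τ.image Prod.fst := mem_image_of_mem _ hA.1
        rw [hfsts, hqa] at this
        exact hjI (mem_sdiff.mp this).1
    · have hqa : q.1 a = p.1 a := hqnc a hac2
      rcases (hmemσ _).mp ha with hA | hA | hA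
      · -- a-strand (x,i): p.1 a = x, j1 = i
        rw [Prod.mk.injEq, hqa] at hA
        obtain ⟨ha1, ha2⟩ := hA
        rw [hqa, ha1, ha2, hqb] at hcon
        obtain ⟨e1, e2, e3, e4, e5, e6, e7, e8⟩ := hold _ hBτ hBij hBxy
        have hj2y : y < j2 := by
          have := hnc (p.1 b, j2) hBτ (x, y) hxyτ
          simp only [not_and] at this
          have h1 : p.1 b < x := hcon.1
          by_contra hcc
          exact (this h1 (by omega)) (by omega)
        refine hP a b hab τ y j2 hM' (by rw [ha1]; exact hxyτ) hBτ ⟨?_, ?_, hj2y⟩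
        · rw [ha1]; exact hcon.1
        · rw [ha1]; omega
      · rw [Prod.mk.injEq, hqa] at hA
        exact hjI (hA.1 ▸ mem_image_of_mem _ (mem_univ a))
      · rw [hqa] at hA
        rw [hqa, hqb] at hcon
        exact hP a b hab τ j1 j2 hM' hA.1 hBτ hcon

lemma chain_le {k : ℕ} : ∀ (c : Fin k) (cs : List (Fin k)),
    List.Chain' (fun a b => b ≤ a) (c :: cs) → ∀ x ∈ cs, x ≤ c := by
  intro c cs
  induction cs generalizing c with
  | nil => intro _ x hx; simp at hx
  | cons d ds ih =>
    intro h x hx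
    have h1 : d ≤ c := (List.isChain_cons_cons.mp h).1
    have h2 := (List.isChain_cons_cons.mp h).2
    rcases List.mem_cons.mp hx with rfl | hx
    · exact h1
    · exact le_trans (ih d h2 x hx) h1

lemma path_aux {k n : ℕ} : ∀ (idxs : List (Fin k)) (states : List ((Fin k → ℕ) × Finset ℕ)),
    states.length = idxs.length + 1 →
    (∀ t a p q, idxs[t]? = some a → states[t]? = some p →
      states[t + 1]? = some q → Step k n a p q) →
    idxs.Chain' (fun a b => b ≤ a) →
    ∀ p0, states.head? = some p0 → ∀ m : ℕ,
      (∀ x ∈ idxs, (x : ℕ) ≤ m) → Mono k p0.1 m → NoNest k n p0 →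
      ∀ pl, states.getLast? = some pl → NoNest k n pl := by
  intro idxs
  induction idxs with
  | nil =>
    intro states hlen _ _ p0 hh m _ _ hP pl hl
    rcases states with _ | ⟨s0, states'⟩
    · simp at hh
    rcases states' with _ | ⟨s1, rest⟩
    · have h1 : s0 = p0 := by simpa using hh
      have h2 : s0 = pl := by simpa using hl
      rw [← h1, h2] at hP
      exact hP
    · simp at hlen
  | cons c cs ih =>
    intro states hlen hsteps hch p0 hh m hm hmono hP pl hl
    rcases states with _ | ⟨s0, states'⟩
    · simp at hh
    rcases states' with _ | ⟨s1, rest⟩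
    · simp at hlen
    have hp0 : s0 = p0 := by simpa using hh
    subst hp0
    have hstep0 : Step k n c s0 s1 := hsteps 0 c s0 s1 (by simp) (by simp) (by simp)
    have hcm : (c : ℕ) ≤ m := hm c (List.mem_cons_self)
    obtain ⟨hmono1, hP1⟩ := step_preserves hstep0 hcm hmono hP
    have hch' : cs.Chain' (fun a b => b ≤ a) := hch.tail
    have hm' : ∀ x ∈ cs, (x : ℕ) ≤ (c : ℕ) := fun x hx => chain_le c cs hch x hx
    refine ih (s1 :: rest) (by simpa using hlen) ?_ hch' s1 rfl (c : ℕ) hm' hmono1 hP1 pl ?_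
    · intro t a pp qq h1 h2 h3
      exact hsteps (t + 1) a pp qq (by simpa using h1) (by simpa using h2) (by simpa using h3)
    · rw [← hl]
      exact (List.getLast?_cons_cons).symm

lemma sorted_mono {k : ℕ} (I : Finset ℕ) (hcard : I.card = k) :
    Mono k (sortedTuple k I) k := by
  intro a b hab _
  have hlen : (I.sort (· ≤ ·)).length = k := by rw [Finset.length_sort, hcard]
  have hs : StrictMono (I.sort (· ≤ ·)).get := Finset.sortedLT_sort I
  have ha : (a : ℕ) < (I.sort (· ≤ ·)).length := by rw [hlen]; exact a.isLt
  have hb : (b : ℕ) < (I.sort (· ≤ ·)).length := by rw [hlen]; exact b.isLt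
  show (I.sort (· ≤ ·)).getD (a : ℕ) 0 < (I.sort (· ≤ ·)).getD (b : ℕ) 0
  rw [List.getD_eq_getElem _ _ ha, List.getD_eq_getElem _ _ hb]
  have := hs (a := ⟨(a : ℕ), ha⟩) (b := ⟨(b : ℕ), hb⟩)
    (by simpa using hab)
  simpa using this

lemma mono_nonest {k n : ℕ} (p : (Fin k → ℕ) × Finset ℕ) (hmono : Mono k p.1 k) :
    NoNest k n p := by
  intro a b hab τ j j' hM ha hb hcon
  have := hmono a b hab a.isLt
  omega

end Stmt15Aux

/-- Suppose a legal path starting from a standard pair `(I,J₀)` (with `I` listed in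
increasing order) ends at `(II, J)`.  If `a < b` and both `(II a, j)` and `(II b, j')`
are strands of the matching `τ(II, J)`, then `(II a, j)` is not nested under
`(II b, j')`: it is not the case that `II b < II a < j < j'`. -/
theorem stmt_15 (k n : ℕ) (I J0 : Finset ℕ) (hIJ : IsStandardPair k n I J0)
    (states : List ((Fin k → ℕ) × Finset ℕ)) (idxs : List (Fin k))
    (h : IsLegalPath k n states idxs)
    (hhead : states.head? = some (sortedTuple k I, J0))
    (II : Fin k → ℕ) (J : Finset ℕ) (hlast : states.getLast? = some (II, J)) :
    ∀ a b : Fin k, a < b → ∀ (τ : Finset (ℕ × ℕ)) (j j' : ℕ),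
      Matching k n (Finset.univ.image II) J τ →
      (II a, j) ∈ τ → (II b, j') ∈ τ →
      ¬(II b < II a ∧ II a < j ∧ j < j') := by
  obtain ⟨hlen, hsteps, hch⟩ := h
  have hmono := Stmt15Aux.sorted_mono I hIJ.1
  have hP : Stmt15Aux.NoNest k n (sortedTuple k I, J0) :=
    Stmt15Aux.mono_nonest _ hmono
  have hfin := Stmt15Aux.path_aux idxs states hlen hsteps hch (sortedTuple k I, J0)
    hhead k (fun x _ => le_of_lt x.isLt) hmono hP (II, J) hlast
  intro a b hab τ j j' hMt ha hb
  exact hfin a b hab τ j j' hMt ha hb
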